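/- Let p be an odd prime. A metric p-group (A, q) has trivial intersection of its maximal isotropic subgroups if and only if (A, q) is either generated by its isotropic elements or anisotropic. -/

import Mathlib

/-- The bilinear form associated to a quadratic form `q : A → kˣ`. -/
def Bform {A k : Type*} [AddCommGroup A] [Field k] (q : A → kˣ) (x y : A) : kˣ :=
  q (x + y) * (q x * q y)⁻¹

/-- `q : A → kˣ` is a quadratic form: `q(-x) = q(x)` and its associated form is bilinear. -/
def IsQuadraticForm {A k : Type*} [AddCommGroup A] [Field k] (q : A → kˣ) : Prop :=
  (∀ x, q (-x) = q x) ∧ ∀ x y z, Bform q (x + y) z = Bform q x z * Bform q y z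

/-- Non-degeneracy of the bilinear form associated to `q`. -/
def Nondeg {A k : Type*} [AddCommGroup A] [Field k] (q : A → kˣ) : Prop :=
  ∀ x, (∀ y, Bform q x y = 1) → x = 0

section helpers

variable {A k : Type*} [AddCommGroup A] [Field k] {q : A → kˣ}

lemma bsymm (q : A → kˣ) (x y : A) : Bform q x y = Bform q y x := by
  unfold Bform; rw [add_comm, mul_comm (q x)]

lemma bzero_left (hq : IsQuadraticForm q) (y : A) : Bform q 0 y = 1 := by
  have h := hq.2 0 0 y
  rw [add_zero] at h
  exact left_eq_mul.mp h

lemma q_zero (hq : IsQuadraticForm q) : q 0 = 1 := by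
  have h := bzero_left hq 0
  unfold Bform at h
  rw [add_zero] at h
  have h2 : q 0 * (q 0 * q 0)⁻¹ = (q 0)⁻¹ := by group
  rw [h2, inv_eq_one] at h
  exact h

def bhom (hq : IsQuadraticForm q) (z : A) : Multiplicative A →* kˣ :=
  MonoidHom.mk' (fun y => Bform q (Multiplicative.toAdd y) z)
    (fun a b => hq.2 (Multiplicative.toAdd a) (Multiplicative.toAdd b) z)

lemma bhom_apply (hq : IsQuadraticForm q) (z : A) (y : Multiplicative A) :
    bhom hq z y = Bform q (Multiplicative.toAdd y) z := rfl

lemma bnsmul_left (hq : IsQuadraticForm q) (n : ℕ) (x z : A) :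
    Bform q (n • x) z = (Bform q x z) ^ n := by
  have h := map_pow (bhom hq z) (Multiplicative.ofAdd x) n
  simpa [bhom_apply] using h

lemma bzsmul_left (hq : IsQuadraticForm q) (n : ℤ) (x z : A) :
    Bform q (n • x) z = (Bform q x z) ^ n := by
  have h := map_zpow (bhom hq z) (Multiplicative.ofAdd x) n
  simpa [bhom_apply] using h

lemma bneg_left (hq : IsQuadraticForm q) (x z : A) :
    Bform q (-x) z = (Bform q x z)⁻¹ := by
  have h := map_inv (bhom hq z) (Multiplicative.ofAdd x)
  simpa [bhom_apply] using h

lemma bzero_right (hq : IsQuadraticForm q) (x : A) : Bform q x 0 = 1 := by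
  rw [bsymm, bzero_left hq]

lemma badd_right (hq : IsQuadraticForm q) (x a b : A) :
    Bform q x (a + b) = Bform q x a * Bform q x b := by
  rw [bsymm, hq.2, bsymm q a x, bsymm q b x]

lemma bnsmul_right (hq : IsQuadraticForm q) (n : ℕ) (x z : A) :
    Bform q x (n • z) = (Bform q x z) ^ n := by
  rw [bsymm, bnsmul_left hq, bsymm q x z]

lemma bzsmul_right (hq : IsQuadraticForm q) (n : ℤ) (x z : A) :
    Bform q x (n • z) = (Bform q x z) ^ n := by
  rw [bsymm, bzsmul_left hq, bsymm q x z]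

lemma bneg_right (hq : IsQuadraticForm q) (x z : A) :
    Bform q x (-z) = (Bform q x z)⁻¹ := by
  rw [bsymm, bneg_left hq, bsymm q x z]

lemma q_add (hq : IsQuadraticForm q) (x y : A) :
    q (x + y) = q x * q y * Bform q x y := by
  unfold Bform
  rw [mul_comm (q (x + y)) ((q x * q y)⁻¹), mul_inv_cancel_left]

lemma bself (hq : IsQuadraticForm q) (x : A) : Bform q x x = q x ^ 2 := by
  have h0 : q (x + -x) = 1 := by rw [add_neg_cancel, q_zero hq]
  rw [q_add hq, hq.1 x, bneg_right hq, mul_inv_eq_one] at h0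
  rw [pow_two]; exact h0.symm

lemma q_nsmul (hq : IsQuadraticForm q) (n : ℕ) (x : A) :
    q (n • x) = q x ^ (n ^ 2) := by
  induction n with
  | zero => simp [q_zero hq]
  | succ n ih =>
    have h : (n + 1) • x = n • x + x := by rw [add_smul, one_smul]
    rw [h, q_add hq, ih, bnsmul_left hq, bself hq, ← pow_mul, ← pow_succ, ← pow_add]
    congr 1
    ring

lemma q_zsmul_one (hq : IsQuadraticForm q) {x : A} (hx : q x = 1) (n : ℤ) :
    q (n • x) = 1 := by
  rcases Int.natAbs_eq n with h | h
  · rw [h, natCast_zsmul, q_nsmul hq, hx, one_pow]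
  · rw [h, neg_zsmul, hq.1, natCast_zsmul, q_nsmul hq, hx, one_pow]

lemma q_pow_card {p : ℕ} (hp : p.Prime) (hodd : p ≠ 2) (hq : IsQuadraticForm q)
    {x : A} {m : ℕ} (hx : (p ^ m) • x = 0) : q x ^ (p ^ m) = 1 := by
  have h1 : q x ^ ((p ^ m) ^ 2) = 1 := by
    have h := q_nsmul hq (p ^ m) x
    rw [hx, q_zero hq] at h
    exact h.symm
  have h2 : q x ^ (2 * p ^ m) = 1 := by
    have hb := bnsmul_right hq (p ^ m) x x
    rw [hx, bzero_right hq, bself hq, ← pow_mul] at hb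
    exact hb.symm
  have hd1 : orderOf (q x) ∣ p ^ (m * 2) := by
    rw [pow_mul]
    exact orderOf_dvd_iff_pow_eq_one.mpr h1
  have hd2 : orderOf (q x) ∣ 2 * p ^ m := orderOf_dvd_iff_pow_eq_one.mpr h2
  obtain ⟨j, hj, hdj⟩ := (Nat.dvd_prime_pow hp).mp hd1
  have hco : (p ^ j).Coprime 2 :=
    Nat.Coprime.pow_left _ ((Nat.coprime_primes hp Nat.prime_two).mpr hodd)
  have hdvd : p ^ j ∣ p ^ m := hco.dvd_of_dvd_mul_left (hdj ▸ hd2)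
  exact orderOf_dvd_iff_pow_eq_one.mp (hdj ▸ hdvd)

lemma q_eq_one_of_sq {p : ℕ} (hp : p.Prime) (hodd : p ≠ 2) (hq : IsQuadraticForm q)
    {x : A} {m : ℕ} (hx : (p ^ m) • x = 0) (h2 : q x ^ 2 = 1) : q x = 1 := by
  have hd1 : orderOf (q x) ∣ p ^ m :=
    orderOf_dvd_iff_pow_eq_one.mpr (q_pow_card hp hodd hq hx)
  have hd2 : orderOf (q x) ∣ 2 := orderOf_dvd_iff_pow_eq_one.mpr h2
  have hco : Nat.Coprime 2 (p ^ m) :=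
    (Nat.Coprime.pow_right _ ((Nat.coprime_primes Nat.prime_two hp).mpr (Ne.symm hodd)))
  have : orderOf (q x) ∣ 1 := by
    have := Nat.dvd_gcd hd2 hd1
    rwa [Nat.Coprime.gcd_eq_one hco] at this
  rw [orderOf_eq_one_iff.mp (Nat.eq_one_of_dvd_one this)]
def perpSubgroup (hq : IsQuadraticForm q) : AddSubgroup A where
  carrier := {x | ∀ y, q y = 1 → Bform q x y = 1}
  zero_mem' := fun y hy => bzero_left hq y
  add_mem' := by
    intro a b ha hb y hy
    rw [hq.2 a b y, ha y hy, hb y hy, mul_one]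
  neg_mem' := by
    intro a ha y hy
    rw [bneg_left hq, ha y hy, inv_one]

lemma mem_perp (hq : IsQuadraticForm q) {x : A} :
    x ∈ perpSubgroup hq ↔ ∀ y, q y = 1 → Bform q x y = 1 := Iff.rfl

lemma perp_pairs_closure (hq : IsQuadraticForm q) {x : A} (hx : x ∈ perpSubgroup hq)
    {b : A} (hb : b ∈ AddSubgroup.closure {y : A | q y = 1}) : Bform q x b = 1 := by
  refine AddSubgroup.closure_induction (p := fun b _ => Bform q x b = 1)
    (fun y hy => hx y hy) (bzero_right hq x)
    (fun a c _ _ ha hc => ?_) (fun a _ ha => ?_) hb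
  · show Bform q x (a + c) = 1
    rw [badd_right hq, ha, hc, mul_one]
  · show Bform q x (-a) = 1
    rw [bneg_right hq, ha, inv_one]

lemma exists_max_iso {A : Type*} [AddCommGroup A] [Finite A] (q : A → kˣ)
    {K : AddSubgroup A} (hK : ∀ x ∈ K, q x = 1) :
    ∃ H, K ≤ H ∧ Maximal (fun L : AddSubgroup A => ∀ x ∈ L, q x = 1) H := by
  have hfin : Finite (AddSubgroup A) :=
    Finite.of_injective (fun (H : AddSubgroup A) => (H : Set A)) SetLike.coe_injective
  obtain ⟨H, hHs, hmax⟩ := Set.Finite.exists_maximalFor id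
    {L : AddSubgroup A | (∀ x ∈ L, q x = 1) ∧ K ≤ L} (Set.toFinite _) ⟨K, hK, le_refl K⟩
  refine ⟨H, hHs.2, hHs.1, fun L hL hHL => ?_⟩
  have : H = L := le_antisymm hHL (hmax ⟨hL, hHs.2.trans hHL⟩ hHL)
  exact this ▸ le_refl _

lemma torsion_exp {p : ℕ} {A : Type*} [AddCommGroup A]
    (hpA : IsPGroup p (Multiplicative A)) (x : A) : ∃ m : ℕ, (p ^ m) • x = 0 := by
  obtain ⟨m, hm⟩ := hpA (Multiplicative.ofAdd x)
  refine ⟨m, ?_⟩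
  have := congrArg Multiplicative.toAdd hm
  simpa using this

lemma exists_p_torsion {p : ℕ} (hp : p.Prime) {A : Type*} [AddCommGroup A]
    (hpA : IsPGroup p (Multiplicative A)) {c : A} (hc : c ≠ 0) :
    ∃ c' : A, c' ∈ AddSubgroup.zmultiples c ∧ c' ≠ 0 ∧ p • c' = 0 := by
  obtain ⟨m, hm⟩ := torsion_exp hpA c
  have hex : ∃ n, (p ^ n) • c = 0 := ⟨m, hm⟩
  classical
  let n := Nat.find hex
  have hn : (p ^ n) • c = 0 := Nat.find_spec hex
  have hn0 : n ≠ 0 := by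
    intro h
    rw [h, pow_zero, one_smul] at hn
    exact hc hn
  refine ⟨(p ^ (n - 1)) • c, ?_, ?_, ?_⟩
  · simpa using AddSubgroup.nsmul_mem (AddSubgroup.mem_zmultiples c) (p ^ (n-1))
  · exact Nat.find_min hex (Nat.pred_lt hn0)
  · rw [smul_smul, ← pow_succ', Nat.sub_add_cancel (Nat.one_le_iff_ne_zero.mpr hn0)]
    exact hn
lemma iInf_eq {A : Type*} [AddCommGroup A] [Finite A] {p : ℕ} (hp : p.Prime)
    (hodd : p ≠ 2) (hpA : IsPGroup p (Multiplicative A))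
    {q : A → kˣ} (hq : IsQuadraticForm q) :
    (⨅ H ∈ {H : AddSubgroup A |
        Maximal (fun K : AddSubgroup A => ∀ x ∈ K, q x = 1) H}, H) =
      AddSubgroup.closure {x : A | q x = 1} ⊓ perpSubgroup hq := by
  ext r
  simp only [AddSubgroup.mem_iInf, AddSubgroup.mem_inf, Set.mem_setOf_eq]
  constructor
  · intro hr
    have hbotiso : ∀ x ∈ (⊥ : AddSubgroup A), q x = 1 := by
      intro x hx
      rw [AddSubgroup.mem_bot.mp hx, q_zero hq]
    obtain ⟨H0, _, hH0⟩ := exists_max_iso q hbotiso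
    have hqr : q r = 1 := hH0.1 r (hr H0 hH0)
    refine ⟨AddSubgroup.subset_closure hqr, ?_⟩
    intro y hy
    have hiso : ∀ x ∈ AddSubgroup.zmultiples y, q x = 1 := by
      intro x hx
      obtain ⟨n, rfl⟩ := AddSubgroup.mem_zmultiples_iff.mp hx
      exact q_zsmul_one hq hy n
    obtain ⟨H, hle, hH⟩ := exists_max_iso q hiso
    have hyH : y ∈ H := hle (AddSubgroup.mem_zmultiples y)
    have hrH : r ∈ H := hr H hH
    have h1 : q (y + r) = 1 := hH.1 _ (H.add_mem hyH hrH)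
    rw [q_add hq, hy, hqr, one_mul, one_mul] at h1
    rw [bsymm]; exact h1
  · rintro ⟨hrB, hrP⟩ H hH
    have h2 : Bform q r r = 1 := perp_pairs_closure hq hrP hrB
    rw [bself hq] at h2
    obtain ⟨m, hm⟩ := torsion_exp hpA r
    have hqr : q r = 1 := q_eq_one_of_sq hp hodd hq hm h2
    have hKiso : ∀ x ∈ H ⊔ AddSubgroup.zmultiples r, q x = 1 := by
      intro x hx
      obtain ⟨h, hh, z, hz, rfl⟩ := AddSubgroup.mem_sup.mp hx
      obtain ⟨n, rfl⟩ := AddSubgroup.mem_zmultiples_iff.mp hz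
      have hhB : h ∈ AddSubgroup.closure {y : A | q y = 1} :=
        AddSubgroup.subset_closure (hH.1 h hh)
      have hpair : Bform q h (n • r) = 1 := by
        rw [bzsmul_right hq, bsymm q h r, perp_pairs_closure hq hrP hhB, one_zpow]
      rw [q_add hq, hH.1 h hh, q_zsmul_one hq hqr, hpair, one_mul, one_mul]
    have hle : H ⊔ AddSubgroup.zmultiples r ≤ H := hH.2 hKiso le_sup_left
    exact hle (AddSubgroup.mem_sup_right (AddSubgroup.mem_zmultiples r))
lemma perp_eq_bot {A : Type*} [AddCommGroup A] [Finite A] {p : ℕ} (hp : p.Prime)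
    (hodd : p ≠ 2) (hpA : IsPGroup p (Multiplicative A))
    {q : A → kˣ} (hq : IsQuadraticForm q)
    (hinf : AddSubgroup.closure {x : A | q x = 1} ⊓ perpSubgroup hq = ⊥)
    {x0 : A} (hx0ne : x0 ≠ 0) (hx0q : q x0 = 1) :
    perpSubgroup hq = ⊥ := by
  classical
  haveI : Fact p.Prime := ⟨hp⟩
  set B := AddSubgroup.closure {x : A | q x = 1} with hB
  rw [eq_bot_iff]
  intro c hc
  rw [AddSubgroup.mem_bot]
  by_contra hcne
  -- a nonzero element of B ⊓ perp is impossible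
  have hBP : ∀ z : A, z ∈ B → z ∈ perpSubgroup hq → z = 0 := by
    intro z h1 h2
    have : z ∈ B ⊓ perpSubgroup hq := ⟨h1, h2⟩
    rw [hinf] at this
    exact AddSubgroup.mem_bot.mp this
  -- isotropic pair with nontrivial pairing
  have hpairex : ∃ x1 x2 : A, q x1 = 1 ∧ q x2 = 1 ∧ Bform q x1 x2 ≠ 1 := by
    by_contra hno
    push_neg at hno
    have hx0P : x0 ∈ perpSubgroup hq := fun y hy => hno x0 y hx0q hy
    exact hx0ne (hBP x0 (AddSubgroup.subset_closure hx0q) hx0P)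
  obtain ⟨x1, x2, h1, h2, hs⟩ := hpairex
  set s := Bform q x1 x2 with hsdef
  obtain ⟨m2, hm2⟩ := torsion_exp hpA x2
  have hs_pow : ∃ t, s ^ (p ^ t) = 1 := by
    refine ⟨m2, ?_⟩
    rw [hsdef, ← bnsmul_right hq, hm2, bzero_right hq]
  set t := Nat.find hs_pow with htdef
  have ht : s ^ (p ^ t) = 1 := Nat.find_spec hs_pow
  have ht0 : t ≠ 0 := by
    intro h
    rw [h, pow_zero, pow_one] at ht
    exact hs ht
  set s' := s ^ (p ^ (t - 1)) with hs'def
  have hs'ne : s' ≠ 1 := Nat.find_min hs_pow (Nat.sub_lt (Nat.pos_of_ne_zero ht0) one_pos)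
  have hs'p : s' ^ p = 1 := by
    rw [hs'def, ← pow_mul, ← pow_succ, Nat.sub_add_cancel (Nat.one_le_iff_ne_zero.mpr ht0)]
    exact ht
  -- the isotropic element pairing to s'
  set x2' := (p ^ (t - 1)) • x2 with hx2'def
  have hx2'q : q x2' = 1 := by rw [hx2'def, q_nsmul hq, h2, one_pow]
  have hs'pair : Bform q x1 x2' = s' := by
    rw [hx2'def, bnsmul_right hq]
  -- c' of order p in perp
  obtain ⟨c', hc'mem, hc'ne, hc'p⟩ := exists_p_torsion hp hpA hcne
  have hc'P : c' ∈ perpSubgroup hq := by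
    obtain ⟨n, rfl⟩ := AddSubgroup.mem_zmultiples_iff.mp hc'mem
    exact AddSubgroup.zsmul_mem _ hc n
  have hqc'ne : q c' ≠ 1 := by
    intro h
    exact hc'ne (hBP c' (AddSubgroup.subset_closure h) hc'P)
  have hqc'p : q c' ^ p = 1 := by
    have : (p ^ 1) • c' = 0 := by rwa [pow_one]
    simpa using q_pow_card hp hodd hq this
  -- s' is a primitive p-th root; q c'⁻¹ is a p-th root of unity
  have hords' : orderOf s' = p := orderOf_eq_prime hs'p hs'ne
  have hprim : IsPrimitiveRoot s' p := hords' ▸ IsPrimitiveRoot.orderOf s'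
  have hprimk : IsPrimitiveRoot (s' : k) p := IsPrimitiveRoot.coe_units_iff.mpr hprim
  haveI : NeZero p := ⟨hp.ne_zero⟩
  have hxi : (((q c')⁻¹ : kˣ) : k) ^ p = 1 := by
    rw [← Units.val_pow_eq_pow_val, inv_pow, hqc'p, inv_one, Units.val_one]
  obtain ⟨i, hip, hi⟩ := hprimk.eq_pow_of_pow_eq_one hxi
  have hiu : s' ^ i = (q c')⁻¹ := Units.ext (by rw [Units.val_pow_eq_pow_val]; exact hi)
  -- the element b
  set b := i • x1 + x2' with hbdef
  have hqb : q b = (q c')⁻¹ := by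
    rw [hbdef, q_add hq, q_nsmul hq, h1, one_pow, one_mul, hx2'q, one_mul,
      bnsmul_left hq, hs'pair, hiu]
  have hbB : b ∈ B := by
    have hx1B : x1 ∈ B := AddSubgroup.subset_closure h1
    exact AddSubgroup.add_mem _ (nsmul_mem hx1B i) (AddSubgroup.subset_closure hx2'q)
  have hd : q (b + c') = 1 := by
    have hbc' : Bform q b c' = 1 := by
      rw [bsymm]
      exact perp_pairs_closure hq hc'P hbB
    rw [q_add hq, hqb, hbc', mul_one, inv_mul_cancel]
  have hdB : b + c' ∈ B := AddSubgroup.subset_closure hd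
  have hc'B : c' ∈ B := by
    have := AddSubgroup.sub_mem _ hdB hbB
    simpa [add_sub_cancel_left] using this
  exact hc'ne (hBP c' hc'B hc'P)
lemma closure_eq_top {A : Type*} [AddCommGroup A] [Finite A]
    {q : A → kˣ} (hq : IsQuadraticForm q) (hnd : Nondeg q)
    (hperp : perpSubgroup hq = ⊥) :
    AddSubgroup.closure {x : A | q x = 1} = ⊤ := by
  classical
  cases nonempty_fintype A
  set B := AddSubgroup.closure {x : A | q x = 1} with hBdef
  have hperp' : ∀ x : A, (∀ b ∈ B, Bform q x b = 1) → x = 0 := by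
    intro x hx
    have hxP : x ∈ perpSubgroup hq := fun y hy => hx y (AddSubgroup.subset_closure hy)
    rw [hperp] at hxP
    exact AddSubgroup.mem_bot.mp hxP
  let chi : A → (Multiplicative ↥B →* k) := fun x =>
    { toFun := fun b => ((Bform q x ((Multiplicative.toAdd b : ↥B) : A) : kˣ) : k)
      map_one' := by
        show ((Bform q x (((0 : ↥B) : A)) : kˣ) : k) = 1
        rw [AddSubgroup.coe_zero, bzero_right hq, Units.val_one]
      map_mul' := by
        intro a b
        show ((Bform q x ((((Multiplicative.toAdd a + Multiplicative.toAdd b) : ↥B) : A)) : kˣ) : k) = _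
        rw [AddSubgroup.coe_add, badd_right hq, Units.val_mul] }
  have hinj : Function.Injective chi := by
    intro x y hxy
    have h1 : ∀ b (hb : b ∈ B), Bform q x b = Bform q y b := by
      intro b hb
      have := DFunLike.congr_fun hxy (Multiplicative.ofAdd (⟨b, hb⟩ : ↥B))
      exact Units.ext this
    have h2 : ∀ b ∈ B, Bform q (x - y) b = 1 := by
      intro b hb
      rw [sub_eq_add_neg, hq.2 x (-y) b, bneg_left hq, h1 b hb, mul_inv_cancel]
    exact sub_eq_zero.mp (hperp' _ h2)
  have hLI := (linearIndependent_monoidHom (Multiplicative ↥B) k).comp chi hinj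
  have hcard : Fintype.card A ≤ Fintype.card (Multiplicative ↥B) := by
    have h := hLI.fintype_card_le_finrank
    rwa [Module.finrank_fintype_fun_eq_card] at h
  have hcard2 : Fintype.card (Multiplicative ↥B) = Fintype.card ↥B := Fintype.card_congr Multiplicative.toAdd
  have hle : Fintype.card A ≤ Fintype.card ↥B := by rwa [hcard2] at hcard
  have hge : Fintype.card ↥B ≤ Fintype.card A := Fintype.card_le_of_injective _ Subtype.val_injective
  exact AddSubgroup.eq_top_of_card_eq B (by
    rw [Nat.card_eq_fintype_card, Nat.card_eq_fintype_card]
    exact le_antisymm hge hle)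
end helpers

/-- For odd `p`, a metric `p`-group is reductive (the intersection of its maximal
isotropic subgroups is trivial) iff it is either generated by its isotropic elements
or anisotropic. -/
theorem stmt14 {k : Type*} [Field k] [CharZero k] [IsAlgClosed k]
    {A : Type*} [AddCommGroup A] [Finite A]
    (p : ℕ) (hp : p.Prime) (hodd : p ≠ 2)
    (hpA : IsPGroup p (Multiplicative A))
    (q : A → kˣ) (hq : IsQuadraticForm q) (hnd : Nondeg q) :
    (⨅ H ∈ {H : AddSubgroup A |
        Maximal (fun K : AddSubgroup A => ∀ x ∈ K, q x = 1) H}, H) = ⊥ ↔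
      (AddSubgroup.closure {x : A | q x = 1} = ⊤ ∨ ∀ x : A, x ≠ 0 → q x ≠ 1) := by
  rw [iInf_eq hp hodd hpA hq]
  constructor
  · intro hinf
    by_cases hani : ∀ x : A, x ≠ 0 → q x ≠ 1
    · exact Or.inr hani
    · left
      push_neg at hani
      obtain ⟨x0, hx0ne, hx0q⟩ := hani
      exact closure_eq_top hq hnd (perp_eq_bot hp hodd hpA hq hinf hx0ne hx0q)
  · rintro (hB | hani)
    · rw [eq_bot_iff]
      intro x hx
      obtain ⟨hxB, hxP⟩ := AddSubgroup.mem_inf.mp hx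
      have hall : ∀ y : A, Bform q x y = 1 := by
        intro y
        have hy : y ∈ AddSubgroup.closure {x : A | q x = 1} := by
          rw [hB]; trivial
        exact perp_pairs_closure hq hxP hy
      exact AddSubgroup.mem_bot.mpr (hnd x hall)
    · have hset : {x : A | q x = 1} ⊆ {0} := by
        intro x hx
        by_contra hne
        exact hani x hne hx
      rw [eq_bot_iff]
      intro x hx
      have hxB := (AddSubgroup.mem_inf.mp hx).1
      have : AddSubgroup.closure {x : A | q x = 1} ≤ ⊥ := by
        have h0 : AddSubgroup.closure ({0} : Set A) = ⊥ := by
          simp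
        rw [← h0]
        exact AddSubgroup.closure_mono hset
      exact this hxB
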